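/- Let M be a matroid on the ground set {1,...,n} with bases B_1, ..., B_t listed so that x^{B_1} <_lex x^{B_2} <_lex ... <_lex x^{B_t}, and let I ⊆ S be the squarefree matroidal ideal generated by x^{B_1}, ..., x^{B_t}. Then I has linear quotients with respect to this ordering: for every 1 < i ≤ t the colon ideal (x^{B_1}, ..., x^{B_{i−1}}) : x^{B_i} is generated by a subset of the variables x_1, ..., x_n. -/

import Mathlib

open MvPolynomial
open scoped symmDiff

/-- `lexLT B' B` encodes `x^{B'} <_lex x^{B}` in the lexicographic order with
`x_1 > x_2 > … > x_n`: the minimum element of the symmetric difference `B ∆ B'`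
belongs to `B`. -/
def lexLT {n : ℕ} (B' B : Finset (Fin n)) : Prop :=
  ∃ a ∈ B, a ∈ B ∆ B' ∧ ∀ b ∈ B ∆ B', a ≤ b

lemma sumSingle_apply {n : ℕ} (s : Finset (Fin n)) (y : Fin n) :
    (∑ x ∈ s, Finsupp.single x (1:ℕ)) y = if y ∈ s then 1 else 0 := by
  rw [Finsupp.finset_sum_apply]
  simp [Finsupp.single_apply, Finset.sum_ite_eq s y (fun _ => 1)]

lemma prodX_eq {n : ℕ} (k : Type) [Field k] (s : Finset (Fin n)) :
    ∏ a ∈ s, (X a : MvPolynomial (Fin n) k)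
      = monomial (∑ a ∈ s, Finsupp.single a 1) 1 := by
  induction s using Finset.cons_induction with
  | empty => simp
  | cons a s ha ih =>
      rw [Finset.prod_cons, Finset.sum_cons, ih, X, monomial_mul, one_mul]

lemma lexLT_asymm {n : ℕ} {B B' : Finset (Fin n)} (h : lexLT B' B) : ¬ lexLT B B' := by
  obtain ⟨a, haB, haΔ, hamin⟩ := h
  rintro ⟨a', ha'B, ha'Δ, ha'min⟩
  rw [symmDiff_comm] at ha'Δ ha'min
  have hEq : a = a' := le_antisymm (hamin _ ha'Δ) (ha'min _ haΔ)
  rcases Finset.mem_symmDiff.mp haΔ with ⟨_, hnB'⟩ | ⟨_, hnB⟩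
  · exact hnB' (hEq ▸ ha'B)
  · exact hnB haB

theorem stmt_3 (k : Type) [Field k] (n t : ℕ)
    (M : Matroid (Fin n)) (hE : M.E = Set.univ)
    (B : Fin t → Finset (Fin n))
    (hbase : ∀ i, M.IsBase ↑(B i))
    (hall : ∀ C : Finset (Fin n), M.IsBase ↑C → ∃ i, B i = C)
    (hsort : ∀ i j : Fin t, i < j → lexLT (B i) (B j)) :
    ∀ i : Fin t, 0 < (i : ℕ) → ∃ V : Set (Fin n),
      Submodule.colon
        (Ideal.span ((fun j => ∏ a ∈ B j, (X a : MvPolynomial (Fin n) k)) '' {j | j < i}))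
        (Ideal.span {∏ a ∈ B i, (X a : MvPolynomial (Fin n) k)})
      = Ideal.span ((fun g => (X g : MvPolynomial (Fin n) k)) '' V) := by
  intro i _
  set J : Ideal (MvPolynomial (Fin n) k) :=
    Ideal.span ((fun j => ∏ a ∈ B j, (X a : MvPolynomial (Fin n) k)) '' {j | j < i}) with hJ
  set colonI : Ideal (MvPolynomial (Fin n) k) :=
    Submodule.colon J (Ideal.span {∏ a ∈ B i, (X a : MvPolynomial (Fin n) k)}) with hcolon
  refine ⟨{g | (X g : MvPolynomial (Fin n) k) ∈ colonI}, ?_⟩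
  have hgen : ((fun j => ∏ a ∈ B j, (X a : MvPolynomial (Fin n) k)) '' {j | j < i})
      = ((fun s => monomial s (1:k)) ''
          ((fun j => ∑ a ∈ B j, Finsupp.single a 1) '' {j | j < i})) := by
    rw [Set.image_image]
    exact Set.image_congr fun j _ => prodX_eq k (B j)
  apply le_antisymm
  · intro f hf
    rw [mem_ideal_span_X_image]
    intro c hc
    have hfm : f * (∏ a ∈ B i, (X a : MvPolynomial (Fin n) k)) ∈ J :=
      Ideal.mem_colon_span_singleton.mp hf
    rw [prodX_eq, hJ, hgen, mem_ideal_span_monomial_image] at hfm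
    have hsup : c + (∑ a ∈ B i, Finsupp.single a 1)
        ∈ (f * monomial (∑ a ∈ B i, Finsupp.single a 1) (1:k)).support := by
      rw [mem_support_iff, coeff_mul_monomial, mul_one]
      exact mem_support_iff.mp hc
    obtain ⟨dj, ⟨j, hj, rfl⟩, hle⟩ := hfm _ hsup
    -- `j < i`, so `lexLT (B j) (B i)`; extract the minimal element `a` of `B i ∆ B j`
    obtain ⟨a, haBi, haΔ, hamin⟩ := hsort j i hj
    have haBj : a ∉ B j := by
      rcases Finset.mem_symmDiff.mp haΔ with ⟨_, h⟩ | ⟨_, h2⟩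
      · exact h
      · exact absurd haBi h2
    -- exchange
    obtain ⟨b, hbmem, hbbase⟩ := (hbase i).exchange (hbase j)
      (by simp [haBi, haBj] : a ∈ (↑(B i) : Set (Fin n)) \ ↑(B j))
    have hbBj : b ∈ B j := by simpa using hbmem.1
    have hbBi : b ∉ B i := by simpa using hbmem.2
    have hab : a ≠ b := fun h => hbBi (h ▸ haBi)
    set Bl : Finset (Fin n) := insert b ((B i).erase a) with hBl
    have hcoe : (↑Bl : Set (Fin n)) = insert b ((↑(B i) : Set (Fin n)) \ {a}) := by
      simp [hBl, Finset.coe_insert, Finset.coe_erase]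
    obtain ⟨l, hl⟩ := hall Bl (by rw [hcoe]; exact hbbase)
    have haBl : a ∉ Bl := by
      simp only [hBl, Finset.mem_insert, Finset.mem_erase]
      rintro (h | ⟨h, _⟩) <;> [exact hab h; exact h rfl]
    have hab_le : a ≤ b := hamin b (Finset.mem_symmDiff.mpr (Or.inr ⟨hbBj, hbBi⟩))
    have hlex : lexLT Bl (B i) := by
      refine ⟨a, haBi, Finset.mem_symmDiff.mpr (Or.inl ⟨haBi, haBl⟩), ?_⟩
      intro y hy
      rcases Finset.mem_symmDiff.mp hy with ⟨hy1, hy2⟩ | ⟨hy1, hy2⟩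
      · have : y = a := by
          by_contra hne
          exact hy2 (Finset.mem_insert_of_mem (Finset.mem_erase.mpr ⟨hne, hy1⟩))
        exact this ▸ le_refl a
      · have : y = b := by
          rcases Finset.mem_insert.mp hy1 with h | h
          · exact h
          · exact absurd (Finset.mem_of_mem_erase h) hy2
        exact this ▸ hab_le
    have hli : l < i := by
      rcases lt_trichotomy l i with h | h | h
      · exact h
      · exact absurd (show a ∈ Bl by rw [← hl, h]; exact haBi) haBl
      · exact absurd (hl ▸ hsort i l h) (lexLT_asymm hlex)
    -- X b belongs to the colon ideal
    have hXb : (X b : MvPolynomial (Fin n) k) ∈ colonI := by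
      rw [hcolon, Ideal.mem_colon_span_singleton]
      have key : (X b : MvPolynomial (Fin n) k) * ∏ a' ∈ B i, X a'
          = X a * ∏ a' ∈ B l, X a' := by
        rw [hl, hBl, Finset.prod_insert (by simp [hbBi] : b ∉ (B i).erase a),
          ← Finset.mul_prod_erase (B i) _ haBi]
        ring
      rw [key]
      exact Ideal.mul_mem_left _ _ (Ideal.subset_span ⟨l, hli, rfl⟩)
    refine ⟨b, hXb, ?_⟩
    have := hle b
    rw [Finsupp.add_apply, sumSingle_apply, sumSingle_apply, if_pos hbBj,
      if_neg hbBi, add_zero] at this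
    omega
  · rw [Ideal.span_le]
    rintro _ ⟨g, hg, rfl⟩
    exact hg
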